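/- Let a, b, c, ν > 0 with b^2 > a·c, q ≥ 2 an integer, and Φ(ξ) = ν·((b + ξa)/(c + ξb))^q. Then Φ has negative Schwarzian derivative on [0,∞): for all ξ ≥ 0, Φ'''(ξ)/Φ'(ξ) − (3/2)(Φ''(ξ)/Φ'(ξ))^2 < 0. -/

import Mathlib

lemma hasDerivAt_mono (K p r s t : ℝ) (m k : ℤ) (x : ℝ) (hu : p + x*r ≠ 0) (hv : s + x*t ≠ 0) :
    HasDerivAt (fun x => K * ((p+x*r)^m * (s+x*t)^k))
      ((K*(m:ℝ)*r) * ((p+x*r)^(m-1) * (s+x*t)^k)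
        + (K*(k:ℝ)*t) * ((p+x*r)^m * (s+x*t)^(k-1))) x := by
  have h1 : HasDerivAt (fun x : ℝ => p + x*r) r x := by
    simpa using ((hasDerivAt_id x).mul_const r).const_add p
  have h2 : HasDerivAt (fun x : ℝ => s + x*t) t x := by
    simpa using ((hasDerivAt_id x).mul_const t).const_add s
  have hu' : HasDerivAt (fun x : ℝ => (p+x*r)^m) (((m:ℝ) * (p+x*r)^(m-1)) * r) x :=
    by have := (hasDerivAt_zpow m (p+x*r) (Or.inl hu)).comp x h1; exact this
  have hv' : HasDerivAt (fun x : ℝ => (s+x*t)^k) (((k:ℝ) * (s+x*t)^(k-1)) * t) x :=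
    by have := (hasDerivAt_zpow k (s+x*t) (Or.inl hv)).comp x h2; exact this
  refine ((hu'.mul hv').const_mul K).congr_deriv ?_
  ring

set_option maxHeartbeats 1000000 in
lemma alg10 (a b qr C1 P Q U V : ℝ) (hU : U ≠ 0) (hV : V ≠ 0) (hP : P ≠ 0) (hQ : Q ≠ 0) (hC1 : C1 ≠ 0) :
  (C1*(qr-1)*a*(qr-2)*a * (P*U⁻¹*U⁻¹*U⁻¹ * (Q⁻¹*V⁻¹))
   + C1*(qr-1)*a*(-qr-1)*b * (P*U⁻¹*U⁻¹ * (Q⁻¹*V⁻¹*V⁻¹))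
   + (C1*(-qr-1)*b*(qr-1)*a * (P*U⁻¹*U⁻¹ * (Q⁻¹*V⁻¹*V⁻¹))
   + C1*(-qr-1)*b*(-qr-2)*b * (P*U⁻¹ * (Q⁻¹*V⁻¹*V⁻¹*V⁻¹))))
   / (C1 * (P*U⁻¹ * (Q⁻¹*V⁻¹)))
  - 3/2 * ((C1*(qr-1)*a * (P*U⁻¹*U⁻¹ * (Q⁻¹*V⁻¹)) + C1*(-qr-1)*b * (P*U⁻¹ * (Q⁻¹*V⁻¹*V⁻¹)))
   / (C1 * (P*U⁻¹ * (Q⁻¹*V⁻¹))))^2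
  = -((qr^2-1) * (a*V - b*U)^2) / (2*U^2*V^2) := by
  field_simp
  ring

set_option maxHeartbeats 1000000 in
theorem stmt10 (a b c ν : ℝ) (ha : 0 < a) (hb : 0 < b) (hc : 0 < c) (hν : 0 < ν)
    (hbac : b ^ 2 > a * c) (q : ℕ) (hq : 2 ≤ q)
    (Φ : ℝ → ℝ) (hΦ : ∀ ξ, Φ ξ = ν * ((b + ξ * a) / (c + ξ * b)) ^ q) :
    ∀ ξ : ℝ, 0 ≤ ξ →
      iteratedDeriv 3 Φ ξ / deriv Φ ξ - (3 / 2) * (iteratedDeriv 2 Φ ξ / deriv Φ ξ) ^ 2 < 0 := by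
  intro ξ hξ
  have hD : a*c - b^2 ≠ 0 := by nlinarith
  set C1 : ℝ := ν*(q:ℝ)*(a*c-b^2) with hC1def
  set S : Set ℝ := {x | 0 < b + x*a ∧ 0 < c + x*b} with hSdef
  have hSopen : IsOpen S := by
    have : S = ((fun x : ℝ => b + x*a) ⁻¹' Set.Ioi 0) ∩ ((fun x : ℝ => c + x*b) ⁻¹' Set.Ioi 0) := rfl
    rw [this]
    exact ((isOpen_Ioi).preimage (by continuity)).inter ((isOpen_Ioi).preimage (by continuity))
  have hξS : ξ ∈ S := ⟨by nlinarith, by nlinarith⟩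
  set g1 : ℝ → ℝ := fun x => C1 * ((b+x*a)^((q:ℤ)-1) * (c+x*b)^(-(q:ℤ)-1)) with hg1def
  set g2 : ℝ → ℝ := fun x =>
      (C1*((q:ℝ)-1)*a) * ((b+x*a)^((q:ℤ)-2) * (c+x*b)^(-(q:ℤ)-1))
    + (C1*(-(q:ℝ)-1)*b) * ((b+x*a)^((q:ℤ)-1) * (c+x*b)^(-(q:ℤ)-2)) with hg2def
  set g3 : ℝ → ℝ := fun x =>
      ((C1*((q:ℝ)-1)*a)*((q:ℝ)-2)*a) * ((b+x*a)^((q:ℤ)-3) * (c+x*b)^(-(q:ℤ)-1))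
    + ((C1*((q:ℝ)-1)*a)*(-(q:ℝ)-1)*b) * ((b+x*a)^((q:ℤ)-2) * (c+x*b)^(-(q:ℤ)-2))
    + (((C1*(-(q:ℝ)-1)*b)*((q:ℝ)-1)*a) * ((b+x*a)^((q:ℤ)-2) * (c+x*b)^(-(q:ℤ)-2))
    + ((C1*(-(q:ℝ)-1)*b)*(-(q:ℝ)-2)*b) * ((b+x*a)^((q:ℤ)-1) * (c+x*b)^(-(q:ℤ)-3))) with hg3def
  have hΦf0 : Φ = fun x => ν * ((b+x*a)^(q:ℤ) * (c+x*b)^(-(q:ℤ))) := by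
    funext x
    rw [hΦ, zpow_neg, zpow_natCast, zpow_natCast, div_pow, div_eq_mul_inv]
  -- first derivative
  have hA : ∀ x ∈ S, HasDerivAt Φ (g1 x) x := by
    intro x hx
    rw [hΦf0]
    have hu : b + x*a ≠ 0 := ne_of_gt hx.1
    have hv : c + x*b ≠ 0 := ne_of_gt hx.2
    have h := hasDerivAt_mono ν b a c b (q:ℤ) (-(q:ℤ)) x hu hv
    convert h using 1
    have eu : (b+x*a)^(q:ℤ) = (b+x*a)^((q:ℤ)-1) * (b+x*a) := by
      rw [← zpow_add_one₀ hu]; congr 1; ring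
    have ev : (c+x*b)^(-(q:ℤ)) = (c+x*b)^(-(q:ℤ)-1) * (c+x*b) := by
      rw [← zpow_add_one₀ hv]; congr 1; ring
    rw [hg1def, eu, ev]
    push_cast
    ring
  -- second derivative (of g1)
  have hB : ∀ x ∈ S, HasDerivAt g1 (g2 x) x := by
    intro x hx
    have hu : b + x*a ≠ 0 := ne_of_gt hx.1
    have hv : c + x*b ≠ 0 := ne_of_gt hx.2
    have h := hasDerivAt_mono C1 b a c b ((q:ℤ)-1) (-(q:ℤ)-1) x hu hv
    convert h using 1
    rw [hg2def]
    simp only [show (q:ℤ)-1-1 = (q:ℤ)-2 from by ring, show -(q:ℤ)-1-1 = -(q:ℤ)-2 from by ring]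
    push_cast
    ring
  -- third derivative (of g2)
  have hC : ∀ x ∈ S, HasDerivAt g2 (g3 x) x := by
    intro x hx
    have hu : b + x*a ≠ 0 := ne_of_gt hx.1
    have hv : c + x*b ≠ 0 := ne_of_gt hx.2
    have h := (hasDerivAt_mono (C1*((q:ℝ)-1)*a) b a c b ((q:ℤ)-2) (-(q:ℤ)-1) x hu hv).add
      (hasDerivAt_mono (C1*(-(q:ℝ)-1)*b) b a c b ((q:ℤ)-1) (-(q:ℤ)-2) x hu hv)
    refine h.congr_deriv ?_
    rw [hg3def]
    simp only [show (q:ℤ)-1-1 = (q:ℤ)-2 from by ring, show -(q:ℤ)-1-1 = -(q:ℤ)-2 from by ring,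
      show (q:ℤ)-2-1 = (q:ℤ)-3 from by ring, show -(q:ℤ)-2-1 = -(q:ℤ)-3 from by ring]
    push_cast
    ring
  have hd1 : deriv Φ ξ = g1 ξ := (hA ξ hξS).deriv
  have hd2 : ∀ x ∈ S, iteratedDeriv 2 Φ x = g2 x := by
    intro x hx
    rw [show (2:ℕ) = 1 + 1 from rfl, iteratedDeriv_succ, iteratedDeriv_one]
    have heq : deriv Φ =ᶠ[nhds x] g1 :=
      Filter.eventuallyEq_of_mem (hSopen.mem_nhds hx) (fun y hy => (hA y hy).deriv)
    rw [heq.deriv_eq]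
    exact (hB x hx).deriv
  have hd3 : iteratedDeriv 3 Φ ξ = g3 ξ := by
    rw [show (3:ℕ) = 2 + 1 from rfl, iteratedDeriv_succ]
    have heq : iteratedDeriv 2 Φ =ᶠ[nhds ξ] g2 :=
      Filter.eventuallyEq_of_mem (hSopen.mem_nhds hξS) hd2
    rw [heq.deriv_eq]
    exact (hC ξ hξS).deriv
  rw [hd1, hd3, hd2 ξ hξS]
  simp only [hg1def, hg2def, hg3def]
  -- now pure algebra
  have hU : (0:ℝ) < b + ξ*a := hξS.1
  have hV : (0:ℝ) < c + ξ*b := hξS.2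
  have hUne : b + ξ*a ≠ 0 := ne_of_gt hU
  have hVne : c + ξ*b ≠ 0 := ne_of_gt hV
  have hP : (b+ξ*a)^(q:ℤ) ≠ 0 := zpow_ne_zero _ hUne
  have hQ : (c+ξ*b)^(q:ℤ) ≠ 0 := zpow_ne_zero _ hVne
  have e1 : (b+ξ*a)^((q:ℤ)-1) = (b+ξ*a)^(q:ℤ) * (b+ξ*a)⁻¹ := zpow_sub_one₀ hUne _
  have e2 : (b+ξ*a)^((q:ℤ)-2) = (b+ξ*a)^(q:ℤ) * (b+ξ*a)⁻¹ * (b+ξ*a)⁻¹ := by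
    rw [show (q:ℤ)-2 = (q:ℤ)-1-1 from by ring, zpow_sub_one₀ hUne, e1]
  have e3 : (b+ξ*a)^((q:ℤ)-3) = (b+ξ*a)^(q:ℤ) * (b+ξ*a)⁻¹ * (b+ξ*a)⁻¹ * (b+ξ*a)⁻¹ := by
    rw [show (q:ℤ)-3 = (q:ℤ)-2-1 from by ring, zpow_sub_one₀ hUne, e2]
  have f0' : (c+ξ*b)^(-(q:ℤ)) = ((c+ξ*b)^(q:ℤ))⁻¹ := zpow_neg _ (q:ℤ)
  have f1 : (c+ξ*b)^(-(q:ℤ)-1) = ((c+ξ*b)^(q:ℤ))⁻¹ * (c+ξ*b)⁻¹ := by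
    rw [zpow_sub_one₀ hVne, f0']
  have f2 : (c+ξ*b)^(-(q:ℤ)-2) = ((c+ξ*b)^(q:ℤ))⁻¹ * (c+ξ*b)⁻¹ * (c+ξ*b)⁻¹ := by
    rw [show -(q:ℤ)-2 = -(q:ℤ)-1-1 from by ring, zpow_sub_one₀ hVne, f1]
  have f3 : (c+ξ*b)^(-(q:ℤ)-3) = ((c+ξ*b)^(q:ℤ))⁻¹ * (c+ξ*b)⁻¹ * (c+ξ*b)⁻¹ * (c+ξ*b)⁻¹ := by
    rw [show -(q:ℤ)-3 = -(q:ℤ)-2-1 from by ring, zpow_sub_one₀ hVne, f2]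
  simp only [e1, e2, e3, f1, f2, f3]
  have hq2 : (2:ℝ) ≤ (q:ℝ) := by exact_mod_cast hq
  have hC1ne : C1 ≠ 0 := by
    rw [hC1def]
    refine mul_ne_zero (mul_ne_zero (ne_of_gt hν) ?_) hD
    positivity
  rw [alg10 a b (q:ℝ) C1 ((b+ξ*a)^(q:ℤ)) ((c+ξ*b)^(q:ℤ)) (b+ξ*a) (c+ξ*b) hUne hVne hP hQ hC1ne]
  apply div_neg_of_neg_of_pos
  · have h1 : (1:ℝ) < (q:ℝ)^2 := by nlinarith
    have h2 : a*(c+ξ*b) - b*(b+ξ*a) = a*c - b^2 := by ring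
    have h3 : (a*(c+ξ*b) - b*(b+ξ*a))^2 > 0 := by rw [h2]; positivity
    nlinarith
  · positivity
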